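/- Let S̄ = (S_0,…,S_n) and K̄ be n-slices of the finite group G, and let μ denote the Möbius function of the lattice of subgroups of G. Then the sum Σ |T_0| · μ(T_0,S_0)·μ(T_1,S_1)⋯μ(T_n,S_n) · m(K̄,T̄), taken over all (n+1)-tuples T̄ = (T_0,…,T_n) of subgroups of G satisfying T_0 ≤ S_0 ≤ T_1 ≤ S_1 ≤ ⋯ ≤ T_n ≤ S_n (each such T̄ is an n-slice), equals |N_G(S̄)| if K̄ is conjugate to S̄ in G, and equals 0 otherwise. -/

import Mathlib

open Finset

variable {G : Type*}

/-- The conjugate slice `ᵍS̄ = (gS₀g⁻¹, …, gSₙg⁻¹)`. -/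
def sliceConj [Group G] {n : ℕ} (g : G) (S : Fin (n + 1) → Subgroup G) :
    Fin (n + 1) → Subgroup G :=
  fun i => (S i).map (MulAut.conj g).toMonoidHom

/-- The mark `m(K̄,S̄) = |{gS₀ ∈ G/S₀ : g⁻¹Kᵢg ≤ Sᵢ for all i}|`. -/
noncomputable def mark [Group G] {n : ℕ} (K S : Fin (n + 1) → Subgroup G) : ℕ :=
  Nat.card {x : G ⧸ S 0 //
    ∃ g : G, QuotientGroup.mk g = x ∧ ∀ i, ∀ k ∈ K i, g⁻¹ * k * g ∈ S i}

/-- The normalizer `N_G(S̄) = ⋂ᵢ N_G(Sᵢ)` of a slice. -/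
def sliceNormalizer [Group G] {n : ℕ} (S : Fin (n + 1) → Subgroup G) : Subgroup G :=
  ⨅ i, Subgroup.normalizer (S i : Set G)

private lemma prod_ite_all {ι : Type*} [Fintype ι] (p : ι → Prop) [DecidablePred p]
    [Decidable (∀ i, p i)] :
    (∏ i, if p i then (1:ℤ) else 0) = if ∀ i, p i then 1 else 0 := by
  by_cases h : ∀ i, p i
  · simp [h]
  · rw [if_neg h]
    push_neg at h
    obtain ⟨i, hi⟩ := h
    exact Finset.prod_eq_zero (Finset.mem_univ i) (if_neg hi)

private lemma dualMu [Group G] [Finite G] [Fintype (Subgroup G)] [DecidableEq (Subgroup G)]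
    (μ : Subgroup G → Subgroup G → ℤ)
    (hμ1 : ∀ H, μ H H = 1)
    (hμ2 : ∀ H K : Subgroup G, ¬H ≤ K → μ H K = 0)
    (hμ3 : ∀ H K : Subgroup G, H < K →
      (∑ᶠ L ∈ {L : Subgroup G | H ≤ L ∧ L ≤ K}, μ H L) = 0)
    (L S : Subgroup G) [DecidablePred fun T => L ≤ T ∧ T ≤ S] :
    (∑ T ∈ Finset.univ.filter (fun T => L ≤ T ∧ T ≤ S), μ T S) = if L = S then 1 else 0 := by
  classical
  set Z : Matrix (Subgroup G) (Subgroup G) ℤ := fun A B => if A ≤ B then 1 else 0 with hZ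
  set M : Matrix (Subgroup G) (Subgroup G) ℤ := fun A B => μ A B with hM
  have hMZ : M * Z = 1 := by
    ext H K'
    rw [Matrix.mul_apply, Matrix.one_apply]
    have h1 : ∀ T ∈ Finset.univ, M H T * Z T K' = if H ≤ T ∧ T ≤ K' then μ H T else 0 := by
      intro T _
      by_cases h2 : T ≤ K'
      · by_cases h1 : H ≤ T
        · simp [hZ, hM, h1, h2]
        · simp [hZ, hM, h1, h2, hμ2 _ _ h1]
      · simp [hZ, hM, h2]
    rw [Finset.sum_congr rfl h1, ← Finset.sum_filter]
    by_cases hHK : H = K'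
    · subst hHK
      have : Finset.univ.filter (fun T => H ≤ T ∧ T ≤ H) = {H} := by
        ext T
        simp only [Finset.mem_filter, Finset.mem_univ, true_and, Finset.mem_singleton]
        constructor
        · rintro ⟨h1, h2⟩; exact le_antisymm h2 h1
        · rintro rfl; exact ⟨le_rfl, le_rfl⟩
      rw [this, Finset.sum_singleton, hμ1, if_pos rfl]
    · rw [if_neg hHK]
      by_cases hle : H ≤ K'
      · have := hμ3 H K' (lt_of_le_of_ne hle hHK)
        rwa [finsum_mem_eq_toFinset_sum, Set.toFinset_setOf] at this
      · apply Finset.sum_eq_zero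
        intro T hT
        simp only [Finset.mem_filter] at hT
        exact absurd (hT.2.1.trans hT.2.2) hle
  have hZM : Z * M = 1 := mul_eq_one_comm.mp hMZ
  have := congrFun (congrFun hZM L) S
  rw [Matrix.mul_apply, Matrix.one_apply] at this
  rw [← this, Finset.sum_filter]
  apply Finset.sum_congr rfl
  intro j _
  by_cases h1 : L ≤ j
  · by_cases h2 : j ≤ S
    · simp [hZ, hM, h1, h2]
    · simp [hZ, hM, h1, h2, hμ2 _ _ h2]
  · simp [hZ, hM, h1]

private lemma card_mul_mark [Group G] {n : ℕ} (K T : Fin (n+1) → Subgroup G)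
    (hT : ∀ i, T 0 ≤ T i) :
    (Nat.card (T 0)) * mark K T
      = Nat.card {g : G // ∀ i, ∀ k ∈ K i, g⁻¹ * k * g ∈ T i} := by
  classical
  set cond : G → Prop := fun g => ∀ i, ∀ k ∈ K i, g⁻¹ * k * g ∈ T i with hcond
  set P : G ⧸ T 0 → Prop := fun x => ∃ g, QuotientGroup.mk g = x ∧ cond g with hP
  have step1 : ∀ g, cond g ↔ P (QuotientGroup.mk g) := by
    intro g
    constructor
    · intro h; exact ⟨g, rfl, h⟩
    · rintro ⟨g', hg', hc⟩
      have ht : g'⁻¹ * g ∈ T 0 := QuotientGroup.eq.mp hg'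
      intro i k hk
      have hgg : g = g' * (g'⁻¹ * g) := by group
      have : g⁻¹ * k * g = (g'⁻¹ * g)⁻¹ * (g'⁻¹ * k * g') * (g'⁻¹ * g) := by
        rw [hgg]; group
      rw [this]
      exact mul_mem (mul_mem (inv_mem (hT i ht)) (hc i k hk)) (hT i ht)
  have e : {g : G // P (QuotientGroup.mk g)} ≃ {x : G ⧸ T 0 // P x} × (T 0) := by
    refine ⟨fun g => (⟨QuotientGroup.mk g.1, g.2⟩,
        ⟨(Quotient.out (QuotientGroup.mk g.1 : G ⧸ T 0))⁻¹ * g.1,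
          QuotientGroup.eq.mp (QuotientGroup.out_eq' _)⟩),
      fun p => ⟨Quotient.out p.1.1 * p.2.1, ?_⟩, ?_, ?_⟩
    · have h1 : (QuotientGroup.mk (Quotient.out p.1.1 * p.2.1) : G ⧸ T 0) = p.1.1 := by
        rw [QuotientGroup.mk_mul_of_mem _ p.2.2, QuotientGroup.out_eq']
      rw [h1]; exact p.1.2
    · intro g
      apply Subtype.ext
      simp
    · intro p
      have h1 : (QuotientGroup.mk (Quotient.out p.1.1 * p.2.1) : G ⧸ T 0) = p.1.1 := by
        rw [QuotientGroup.mk_mul_of_mem _ p.2.2, QuotientGroup.out_eq']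
      refine Prod.ext (Subtype.ext h1) (Subtype.ext ?_)
      simp only [h1]
      group
  have h2 : Nat.card {g : G // cond g} = Nat.card {g : G // P (QuotientGroup.mk g)} :=
    Nat.card_congr (Equiv.subtypeEquivRight step1)
  have h3 : mark K T = Nat.card {x : G ⧸ T 0 // P x} := rfl
  rw [h3, h2, Nat.card_congr e, Nat.card_prod, mul_comm]

private lemma conj_comp [Group G] (a b : G) :
    (MulAut.conj a).toMonoidHom.comp (MulAut.conj b).toMonoidHom
      = (MulAut.conj (a * b)).toMonoidHom := by
  ext x
  simp [mul_assoc]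

private lemma map_conj_conj [Group G] (a b : G) (H : Subgroup G) :
    (H.map (MulAut.conj b).toMonoidHom).map (MulAut.conj a).toMonoidHom
      = H.map (MulAut.conj (a * b)).toMonoidHom := by
  rw [Subgroup.map_map, conj_comp]

private lemma map_conj_eq_iff [Group G] (x : G) (H : Subgroup G) :
    H.map (MulAut.conj x).toMonoidHom = H ↔ x ∈ Subgroup.normalizer (H : Set G) := by
  rw [Subgroup.mem_normalizer_iff]
  constructor
  · intro h y
    conv_rhs => rw [← h]
    rw [Subgroup.mem_map_equiv, MulAut.conj_symm_apply]
    have h2 : x⁻¹ * (x * y * x⁻¹) * x = y := by group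
    rw [h2]
  · intro h
    ext y
    rw [Subgroup.mem_map_equiv, MulAut.conj_symm_apply]
    have h2 : x * (x⁻¹ * y * x) * x⁻¹ = y := by group
    have h3 := h (x⁻¹ * y * x)
    rwa [h2] at h3

private lemma chain_iff {n : ℕ} [Group G] (S M : Fin (n+1) → Subgroup G)
    (hS : Monotone S) (hM : Monotone M) :
    (M 0 = S 0 ∧ ∀ j : Fin n, S j.castSucc ⊔ M j.succ = S j.succ) ↔ ∀ i, M i = S i := by
  constructor
  · rintro ⟨h0, hj⟩
    intro i
    induction i using Fin.induction with
    | zero => exact h0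
    | succ j ih =>
      have h1 : S j.castSucc ≤ M j.succ := ih ▸ hM (Fin.castSucc_lt_succ : j.castSucc < j.succ).le
      rw [← hj j, sup_eq_right.mpr h1]
  · intro h
    refine ⟨h 0, fun j => ?_⟩
    rw [h j.succ, sup_eq_right.mpr (hS (Fin.castSucc_lt_succ : j.castSucc < j.succ).le)]

private def Mslice [Group G] {n : ℕ} (K : Fin (n+1) → Subgroup G) (g : G) :
    Fin (n+1) → Subgroup G :=
  fun i => (K i).map (MulAut.conj g⁻¹).toMonoidHom

private def LoS [Group G] {n : ℕ} (S K : Fin (n+1) → Subgroup G) (g : G) :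
    Fin (n+1) → Subgroup G :=
  Fin.cases (Mslice K g 0) (fun j => S j.castSucc ⊔ Mslice K g j.succ)

private lemma LoS_zero [Group G] {n : ℕ} (S K : Fin (n+1) → Subgroup G) (g : G) :
    LoS S K g 0 = Mslice K g 0 := by
  simp [LoS]

private lemma LoS_succ [Group G] {n : ℕ} (S K : Fin (n+1) → Subgroup G) (g : G) (j : Fin n) :
    LoS S K g j.succ = S j.castSucc ⊔ Mslice K g j.succ := by
  simp [LoS]

/-- `Σ_{T₀ ≤ S₀ ≤ T₁ ≤ ⋯ ≤ Tₙ ≤ Sₙ} |T₀|·μ(T₀,S₀)⋯μ(Tₙ,Sₙ)·m(K̄,T̄)`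
equals `|N_G(S̄)|` if `K̄` is conjugate to `S̄`, and `0` otherwise.  (`μ` is the
Möbius function of the subgroup lattice, characterized by its recurrence.) -/
theorem idempotent_orthogonality {n : ℕ} [Group G] [Finite G]
    (μ : Subgroup G → Subgroup G → ℤ)
    (hμ1 : ∀ H, μ H H = 1)
    (hμ2 : ∀ H K : Subgroup G, ¬H ≤ K → μ H K = 0)
    (hμ3 : ∀ H K : Subgroup G, H < K →
      (∑ᶠ L ∈ {L : Subgroup G | H ≤ L ∧ L ≤ K}, μ H L) = 0)
    (S K : Fin (n + 1) → Subgroup G) (hS : Monotone S) (hK : Monotone K) :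
    ((∃ g : G, sliceConj g K = S) →
      (∑ᶠ T ∈ {T : Fin (n + 1) → Subgroup G |
          (∀ i, T i ≤ S i) ∧ ∀ i : Fin n, S i.castSucc ≤ T i.succ},
        (Nat.card (T 0) : ℤ) * (∏ i, μ (T i) (S i)) * (mark K T : ℤ)) =
        (Nat.card (sliceNormalizer S) : ℤ)) ∧
    (¬(∃ g : G, sliceConj g K = S) →
      (∑ᶠ T ∈ {T : Fin (n + 1) → Subgroup G |
          (∀ i, T i ≤ S i) ∧ ∀ i : Fin n, S i.castSucc ≤ T i.succ},
        (Nat.card (T 0) : ℤ) * (∏ i, μ (T i) (S i)) * (mark K T : ℤ)) = 0) := by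
  classical
  letI : Fintype G := Fintype.ofFinite G
  letI : Fintype (Subgroup G) := Fintype.ofFinite _
  have hMmono : ∀ g : G, Monotone (Mslice K g) :=
    fun g i j hij => Subgroup.map_mono (hK hij)
  have key : (∑ᶠ T ∈ {T : Fin (n + 1) → Subgroup G |
          (∀ i, T i ≤ S i) ∧ ∀ i : Fin n, S i.castSucc ≤ T i.succ},
        (Nat.card (T 0) : ℤ) * (∏ i, μ (T i) (S i)) * (mark K T : ℤ))
      = (Nat.card {g : G // ∀ i, Mslice K g i = S i} : ℤ) := by
    rw [finsum_mem_eq_toFinset_sum]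
    have stepA : ∀ T ∈ ({T : Fin (n + 1) → Subgroup G |
          (∀ i, T i ≤ S i) ∧ ∀ i : Fin n, S i.castSucc ≤ T i.succ} : Set _).toFinset,
        (Nat.card (T 0) : ℤ) * (∏ i, μ (T i) (S i)) * (mark K T : ℤ)
          = ∑ g : G, (if ∀ i, Mslice K g i ≤ T i then ∏ i, μ (T i) (S i) else 0) := by
      intro T hT
      rw [Set.mem_toFinset] at hT
      have hT0 : ∀ i, T 0 ≤ T i := by
        intro i
        induction i using Fin.cases with
        | zero => exact le_rfl
        | succ j => exact (hT.1 0).trans ((hS (Fin.zero_le _)).trans (hT.2 j))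
      have hcond : ∀ g : G, (∀ i, ∀ k ∈ K i, g⁻¹ * k * g ∈ T i)
          ↔ ∀ i, Mslice K g i ≤ T i := by
        intro g
        refine forall_congr' fun i => ?_
        rw [Mslice, Subgroup.map_le_iff_le_comap]
        have h2 : ∀ k : G, (MulAut.conj g⁻¹).toMonoidHom k = g⁻¹ * k * g := by
          intro k; simp [mul_assoc]
        constructor
        · intro h k hk
          rw [Subgroup.mem_comap, h2]
          exact h k hk
        · intro h k hk
          have := h hk
          rwa [Subgroup.mem_comap, h2] at this
      have hcard : Nat.card (T 0) * mark K T
          = (Finset.univ.filter fun g : G => ∀ i, Mslice K g i ≤ T i).card := by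
        rw [card_mul_mark K T hT0, Nat.card_congr (Equiv.subtypeEquivRight hcond),
          Nat.card_eq_fintype_card, Fintype.card_subtype]
      calc (Nat.card (T 0) : ℤ) * (∏ i, μ (T i) (S i)) * (mark K T : ℤ)
          = (∏ i, μ (T i) (S i)) * ((Nat.card (T 0) * mark K T : ℕ) : ℤ) := by
            push_cast; ring
        _ = (∏ i, μ (T i) (S i))
              * ∑ g : G, (if ∀ i, Mslice K g i ≤ T i then (1:ℤ) else 0) := by
            rw [hcard, ← Finset.sum_boole]
        _ = ∑ g : G, (if ∀ i, Mslice K g i ≤ T i then ∏ i, μ (T i) (S i) else 0) := by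
            rw [Finset.mul_sum]
            exact Finset.sum_congr rfl fun g _ => by rw [mul_ite, mul_one, mul_zero]
    rw [Finset.sum_congr rfl stepA, Finset.sum_comm]
    have inner : ∀ g : G,
        (∑ T ∈ ({T : Fin (n + 1) → Subgroup G |
            (∀ i, T i ≤ S i) ∧ ∀ i : Fin n, S i.castSucc ≤ T i.succ} : Set _).toFinset,
          if ∀ i, Mslice K g i ≤ T i then ∏ i, μ (T i) (S i) else 0)
        = (if ∀ i, Mslice K g i = S i then (1:ℤ) else 0) := by
      intro g
      rw [← Finset.sum_filter]
      have hfil : (({T : Fin (n + 1) → Subgroup G |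
            (∀ i, T i ≤ S i) ∧ ∀ i : Fin n, S i.castSucc ≤ T i.succ} : Set _).toFinset.filter
            fun T => ∀ i, Mslice K g i ≤ T i)
          = Fintype.piFinset (fun i => Finset.univ.filter fun U => LoS S K g i ≤ U ∧ U ≤ S i) := by
        ext T
        simp only [Finset.mem_filter, Set.mem_toFinset, Set.mem_setOf_eq,
          Fintype.mem_piFinset, Finset.mem_univ, true_and]
        constructor
        · rintro ⟨⟨h1, h2⟩, h3⟩ i
          refine ⟨?_, h1 i⟩
          induction i using Fin.cases with
          | zero => rw [LoS_zero]; exact h3 0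
          | succ j => rw [LoS_succ]; exact sup_le (h2 j) (h3 j.succ)
        · intro h
          refine ⟨⟨fun i => (h i).2, fun j => ?_⟩, fun i => ?_⟩
          · have := (h j.succ).1
            rw [LoS_succ] at this
            exact le_sup_left.trans this
          · induction i using Fin.cases with
            | zero =>
              have := (h 0).1
              rwa [LoS_zero] at this
            | succ j =>
              have := (h j.succ).1
              rw [LoS_succ] at this
              exact le_sup_right.trans this
      rw [hfil, ← Finset.prod_univ_sum
        (fun i => Finset.univ.filter fun U => LoS S K g i ≤ U ∧ U ≤ S i)
        (fun i U => μ U (S i))]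
      rw [Finset.prod_congr rfl fun i _ => dualMu μ hμ1 hμ2 hμ3 (LoS S K g i) (S i)]
      rw [prod_ite_all]
      have hiff : (∀ i, LoS S K g i = S i) ↔ (∀ i, Mslice K g i = S i) := by
        refine (Fin.forall_fin_succ (P := fun i => LoS S K g i = S i)).trans (Iff.trans ?_
          (chain_iff S (Mslice K g) hS (hMmono g)))
        rw [LoS_zero]
        exact and_congr_right fun _ => forall_congr' fun j => by rw [LoS_succ]
      rw [if_congr hiff rfl rfl]
    rw [Finset.sum_congr rfl fun g _ => inner g, Finset.sum_boole]
    have : Nat.card {g : G // ∀ i, Mslice K g i = S i}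
        = (Finset.univ.filter fun g : G => ∀ i, Mslice K g i = S i).card := by
      rw [Nat.card_eq_fintype_card, Fintype.card_subtype]
    rw [this]
  constructor
  · rintro ⟨g, hg⟩
    rw [key]
    have hg2 : ∀ i, (K i).map (MulAut.conj g).toMonoidHom = S i := fun i => congrFun hg i
    have : Nat.card {h : G // ∀ i, Mslice K h i = S i} = Nat.card (sliceNormalizer S) := by
      apply Nat.card_congr
      refine ⟨fun h => ⟨h.1⁻¹ * g⁻¹, ?_⟩, fun x => ⟨g⁻¹ * x.1⁻¹, fun i => ?_⟩, ?_, ?_⟩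
      · refine Subgroup.mem_iInf.mpr fun i => ?_
        rw [← map_conj_eq_iff]
        have h5 : h.1⁻¹ * g⁻¹ * g = h.1⁻¹ := by group
        calc (S i).map (MulAut.conj (h.1⁻¹ * g⁻¹)).toMonoidHom
            = ((K i).map (MulAut.conj g).toMonoidHom).map
                (MulAut.conj (h.1⁻¹ * g⁻¹)).toMonoidHom := by rw [hg2 i]
          _ = (K i).map (MulAut.conj (h.1⁻¹ * g⁻¹ * g)).toMonoidHom := map_conj_conj _ _ _
          _ = S i := by rw [h5]; exact h.2 i
      · have hx : x.1 ∈ Subgroup.normalizer (S i : Set G) := Subgroup.mem_iInf.mp x.2 i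
        show (K i).map (MulAut.conj (g⁻¹ * (x.1)⁻¹)⁻¹).toMonoidHom = S i
        have hrw : (g⁻¹ * (x.1)⁻¹)⁻¹ = x.1 * g := by group
        rw [hrw, ← map_conj_conj, hg2 i, map_conj_eq_iff]
        exact hx
      · intro h
        apply Subtype.ext
        show g⁻¹ * (h.1⁻¹ * g⁻¹)⁻¹ = h.1
        group
      · intro x
        apply Subtype.ext
        show (g⁻¹ * x.1⁻¹)⁻¹ * g⁻¹ = x.1
        group
    rw [this]
  · intro hne
    rw [key]
    have : IsEmpty {g : G // ∀ i, Mslice K g i = S i} := by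
      constructor
      rintro ⟨g, hg⟩
      exact hne ⟨g⁻¹, funext fun i => hg i⟩
    rw [Nat.card_of_isEmpty]
    norm_num
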